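/- If a fractional ideal $I$ of a number field $F$ of degree $n$ is reduced in the usual sense (i.e., $1$ is a minimal element of $I$), then the divisor $d(I)$ is strongly $C$-reduced with $C = \sqrt{n}$; that is, $1$ is primitive in $I$ and every nonzero $g \in N(I)^{-1/n} I$ satisfies $\|g\| \ge 1$. -/

import Mathlib

open NumberField FractionalIdeal Finset
open scoped nonZeroDivisors

noncomputable def enorm (F : Type*) [Field F] [NumberField F] (g : F) : ℝ :=
  Real.sqrt (∑ w : InfinitePlace F, w.mult * (w g) ^ 2)

noncomputable def scaleFactor {F : Type*} [Field F] [NumberField F]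
    (I : FractionalIdeal (𝓞 F)⁰ F) : ℝ :=
  (FractionalIdeal.absNorm I : ℝ) ^ (-(1 : ℝ) / (Module.finrank ℚ F))

def PrimitiveOne {F : Type*} [Field F] [NumberField F]
    (I : FractionalIdeal (𝓞 F)⁰ F) : Prop :=
  (1 : F) ∈ I ∧ ∀ d : ℕ, 2 ≤ d → ((d : F)⁻¹ ∉ I)

def StronglyReduced {F : Type*} [Field F] [NumberField F] (C : ℝ)
    (I : FractionalIdeal (𝓞 F)⁰ F) : Prop :=
  PrimitiveOne I ∧
    ∀ g ∈ I, g ≠ 0 → enorm F 1 ≤ C * (scaleFactor I * enorm F g)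

noncomputable def parF (F : Type*) [Field F] [NumberField F] : ℝ :=
  (2 / Real.pi) ^ (InfinitePlace.nrComplexPlaces F) * Real.sqrt |(discr F : ℝ)|

lemma absNorm_le_of_mem {F : Type*} [Field F] [NumberField F]
    (I : FractionalIdeal (𝓞 F)⁰ F) (hI : I ≠ 0) {g : F} (hg : g ∈ I) (hg0 : g ≠ 0) :
    FractionalIdeal.absNorm I ≤ |Algebra.norm ℚ g| := by
  have hspan : spanSingleton (𝓞 F)⁰ g ≤ I := spanSingleton_le_iff_mem.mpr hg
  have hJle : I⁻¹ * spanSingleton (𝓞 F)⁰ g ≤ 1 := by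
    calc I⁻¹ * spanSingleton (𝓞 F)⁰ g ≤ I⁻¹ * I := by gcongr
    _ = 1 := by rw [mul_comm]; exact mul_inv_cancel₀ hI
  obtain ⟨J₀, hJ₀⟩ := le_one_iff_exists_coeIdeal.mp hJle
  have hspan_eq : spanSingleton (𝓞 F)⁰ g = I * (I⁻¹ * spanSingleton (𝓞 F)⁰ g) := by
    rw [← mul_assoc, mul_inv_cancel₀ hI, one_mul]
  have hJne : (J₀ : FractionalIdeal (𝓞 F)⁰ F) ≠ 0 := by
    intro h
    rw [← hJ₀, h, mul_zero] at hspan_eq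
    exact hg0 (by simpa using spanSingleton_eq_zero_iff.mp hspan_eq)
  have h1 : (1 : ℚ) ≤ FractionalIdeal.absNorm ((J₀ : FractionalIdeal (𝓞 F)⁰ F)) := by
    rw [coeIdeal_absNorm]
    have : Ideal.absNorm J₀ ≠ 0 := by
      intro h
      exact hJne (by rw [Ideal.absNorm_eq_zero_iff.mp h]; simp)
    exact_mod_cast Nat.one_le_iff_ne_zero.mpr this
  calc FractionalIdeal.absNorm I
      ≤ FractionalIdeal.absNorm I * FractionalIdeal.absNorm ((J₀ : FractionalIdeal (𝓞 F)⁰ F)) :=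
        le_mul_of_one_le_right (absNorm_nonneg I) h1
    _ = |Algebra.norm ℚ g| := by
        rw [← _root_.map_mul, hJ₀, ← hspan_eq, absNorm_span_singleton]

theorem stronglyReduced_of_one_minimal {F : Type*} [Field F] [NumberField F]
    (I : FractionalIdeal (𝓞 F)⁰ F) (hone : (1 : F) ∈ I)
    (hmin : ∀ g ∈ I, (∀ w : InfinitePlace F, w g < w 1) → g = 0) :
    StronglyReduced (Real.sqrt (Module.finrank ℚ F)) I := by
  have hI : I ≠ 0 := fun h => one_ne_zero ((mem_zero_iff _).mp (h ▸ hone))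
  set n := Module.finrank ℚ F with hn
  have hn0 : 0 < n := Module.finrank_pos
  have hnR : (0 : ℝ) < n := by exact_mod_cast hn0
  constructor
  · refine ⟨hone, fun d hd hmem => ?_⟩
    have hdF : (d : F) ≠ 0 := Nat.cast_ne_zero.mpr (by omega)
    have := hmin _ hmem (fun w => by
      rw [_root_.map_one, map_inv₀]
      have hwd : (w (d : F)) = (d : ℝ) := by
        rw [← InfinitePlace.norm_embedding_eq, map_natCast]
        simp
      rw [hwd, inv_lt_one_iff₀]
      right
      exact_mod_cast hd)
    exact (inv_ne_zero hdF) this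
  · intro g hg hg0
    -- notation
    set N : ℝ := (FractionalIdeal.absNorm I : ℝ) with hN
    have hNpos : 0 < N := by
      have := (FractionalIdeal.absNorm_eq_zero_iff (I := I)).not.mpr hI
      have hnn := FractionalIdeal.absNorm_nonneg I
      rw [hN]
      exact_mod_cast lt_of_le_of_ne hnn (Ne.symm this)
    set S : ℝ := ∑ w : InfinitePlace F, (w.mult : ℝ) * (w g) ^ 2 with hS
    have hSnn : 0 ≤ S := Finset.sum_nonneg fun w _ => by positivity
    have hNg : N ≤ |(Algebra.norm ℚ g : ℝ)| := by
      rw [hN, ← Rat.cast_abs]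
      exact_mod_cast absNorm_le_of_mem I hI hg hg0
    have hprod : ∏ w : InfinitePlace F, (w g) ^ w.mult = |(Algebra.norm ℚ g : ℝ)| := by
      rw [← Rat.cast_abs]
      exact_mod_cast InfinitePlace.prod_eq_abs_norm g
    -- AM-GM
    have hw_sum : ∑ w : InfinitePlace F, (w.mult : ℝ) / n = 1 := by
      rw [← Finset.sum_div]
      rw [div_eq_one_iff_eq (ne_of_gt hnR)]
      exact_mod_cast InfinitePlace.sum_mult_eq (K := F)
    have hgm := Real.geom_mean_le_arith_mean_weighted Finset.univ
      (fun w : InfinitePlace F => (w.mult : ℝ) / n) (fun w => (w g) ^ 2)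
      (fun w _ => by positivity) hw_sum (fun w _ => by positivity)
    have hlhs : (∏ w : InfinitePlace F, ((w g) ^ 2) ^ ((w.mult : ℝ) / n)) =
        |(Algebra.norm ℚ g : ℝ)| ^ ((2 : ℝ) / n) := by
      rw [← hprod, ← Real.finset_prod_rpow _ _ (fun w _ => by positivity)]
      refine Finset.prod_congr rfl fun w _ => ?_
      rw [← Real.rpow_natCast (w g) 2, ← Real.rpow_natCast (w g) w.mult,
        ← Real.rpow_mul (by positivity), ← Real.rpow_mul (by positivity)]
      congr 1
      push_cast
      ring
    have hS_le : |(Algebra.norm ℚ g : ℝ)| ^ ((2 : ℝ) / n) ≤ S := by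
      rw [← hlhs]
      refine hgm.trans ?_
      have : ∑ w : InfinitePlace F, ((w.mult : ℝ) / n) * (w g) ^ 2 = S / n := by
        rw [hS, Finset.sum_div]
        exact Finset.sum_congr rfl fun w _ => by ring
      rw [this]
      exact div_le_self hSnn (by exact_mod_cast hn0)
    have hNS : N ^ ((2 : ℝ) / n) ≤ S :=
      le_trans (Real.rpow_le_rpow hNpos.le hNg (by positivity)) hS_le
    have hkey : N ^ ((1 : ℝ) / n) ≤ Real.sqrt S := by
      rw [Real.sqrt_eq_rpow]
      calc N ^ ((1 : ℝ) / n) = (N ^ ((2 : ℝ) / n)) ^ ((1 : ℝ) / 2) := by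
            rw [← Real.rpow_mul hNpos.le]; congr 1; field_simp
        _ ≤ S ^ ((1 : ℝ) / 2) := Real.rpow_le_rpow (by positivity) hNS (by norm_num)
    -- conclude
    have he1 : enorm F 1 = Real.sqrt n := by
      unfold _root_.enorm
      congr 1
      simp only [_root_.map_one, one_pow, mul_one]
      exact_mod_cast InfinitePlace.sum_mult_eq (K := F)
    rw [he1]
    unfold _root_.enorm scaleFactor
    rw [← hS, ← hN, ← hn]
    have hsf : N ^ (-(1 : ℝ) / (n : ℝ)) = (N ^ ((1 : ℝ) / n))⁻¹ := by
      rw [neg_div, Real.rpow_neg hNpos.le]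
    rw [hsf]
    refine le_mul_of_one_le_right (Real.sqrt_nonneg _) ?_
    rw [← div_eq_inv_mul, le_div_iff₀ (by positivity), one_mul]
    exact hkey
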